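/- No purely imaginary eigenvalues beyond the simple zero at a = 1 (Proposition 3.4). Let A(a) be the normalized N-cycle matrix defined in the context, and assume (−1)^{N_aut} = β and Σ_{m=1}^N 1/α_m ≠ 0. Then: (a) 0 is an algebraically simple root of the characteristic polynomial of A(1), and A(1) has no other eigenvalue with zero real part (in particular no nonzero purely imaginary eigenvalue); (b) for every real a > 1, the matrix A(a) has no eigenvalue with zero real part. -/

import Mathlib

open scoped BigOperators
open Polynomial

/-- The normalized `N`-cycle matrix `A(a)`: diagonal entries `-a·α m`,
sub-diagonal entries `1`, corner entry `A 0 (N-1) = β`; all other entries `0`. -/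
noncomputable def Acyc (N : ℕ) (α : Fin N → ℝ) (β : ℝ) (a : ℝ) :
    Matrix (Fin N) (Fin N) ℝ :=
  Matrix.of fun i j =>
    if j = i then -(a * α i)
    else if ((j : ℕ) + 1) % N = (i : ℕ) then (if (i : ℕ) = 0 then β else 1) else 0

/-- The eigenvalues of a real matrix: roots in `ℂ` of its characteristic
polynomial, counted with algebraic multiplicity. -/
noncomputable def specC {N : ℕ} (A : Matrix (Fin N) (Fin N) ℝ) : Multiset ℂ :=
  (Matrix.charpoly (A.map (algebraMap ℝ ℂ))).roots

/-- `μ(A)`: the number of eigenvalues of `A` with strictly positive real part,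
counted with algebraic multiplicity. -/
noncomputable def muM {N : ℕ} (A : Matrix (Fin N) (Fin N) ℝ) : ℕ :=
  Multiset.card ((specC A).filter fun z => 0 < z.re)

/-- `N_aut`: the number of indices `m` with `α m < 0`. -/
noncomputable def NautOf {N : ℕ} (α : Fin N → ℝ) : ℕ :=
  (Finset.univ.filter fun m => α m < 0).card

open Fin.NatCast in
lemma fin_add_one_closure {n : ℕ} (P : Fin (n+1) → Prop)
    (hstep : ∀ i, P i → P (i + 1)) {i : Fin (n+1)} (hi : P i) : ∀ j, P j := by
  have key : ∀ k : ℕ, P (i + (k : Fin (n+1))) := by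
    intro k
    induction k with
    | zero => simpa using hi
    | succ k ih =>
      have h2 := hstep _ ih
      have hcast : ((k+1 : ℕ) : Fin (n+1)) = (k : Fin (n+1)) + 1 := by push_cast; ring
      rw [hcast, ← add_assoc]
      exact h2
  intro j
  have h3 := key (j - i).val
  rwa [Fin.cast_val_eq_self, add_sub_cancel] at h3

lemma perm_classify {n : ℕ} (hn : 1 ≤ n) (σ : Equiv.Perm (Fin (n+1)))
    (h : ∀ i, σ i = i ∨ σ i = i + 1) : σ = 1 ∨ σ = finRotate (n+1) := by
  by_cases hex : ∃ i, σ i = i + 1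
  · right
    obtain ⟨i0, hi0⟩ := hex
    have hstep : ∀ i : Fin (n+1), σ i = i + 1 → σ (i + 1) = (i + 1) + 1 := by
      intro i hi
      rcases h (i + 1) with h1 | h1
      · exfalso
        have h2 : i = i + 1 := σ.injective (hi.trans h1.symm)
        have h3 : (0 : Fin (n+1)) = 1 := by
          have := (left_eq_add).mp h2
          simpa using this.symm
        have : ((0 : Fin (n+1)) : ℕ) = ((1 : Fin (n+1)) : ℕ) := by rw [h3]
        simp [Fin.val_one'] at this
        omega
      · exact h1
    have hall := fin_add_one_closure (fun i => σ i = i + 1) hstep hi0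
    ext j
    simp [hall j]
  · left
    push_neg at hex
    ext i
    rcases h i with h1 | h1
    · simp [h1]
    · exact absurd h1 (hex i)

lemma det_cyclic {R : Type*} [CommRing R] {n : ℕ} (hn : 1 ≤ n)
    (M : Matrix (Fin (n+1)) (Fin (n+1)) R) (d e : Fin (n+1) → R)
    (hd : ∀ i, M i i = d i) (he : ∀ i, M (i+1) i = e i)
    (h0 : ∀ i j : Fin (n+1), j ≠ i → j ≠ i + 1 → M j i = 0) :
    M.det = ∏ i, d i + (-1 : R)^n * ∏ i, e i := by
  have hone_ne : (1 : Equiv.Perm (Fin (n+1))) ≠ finRotate (n+1) := by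
    intro hcon
    have : (0 : Fin (n+1)) = finRotate (n+1) 0 := by rw [← hcon]; rfl
    rw [finRotate_succ_apply, zero_add] at this
    have : ((0 : Fin (n+1)) : ℕ) = ((1 : Fin (n+1)) : ℕ) := by rw [this]
    simp [Fin.val_one'] at this
    omega
  rw [Matrix.det_apply]
  rw [← Finset.sum_subset (Finset.subset_univ ({1, finRotate (n+1)} : Finset (Equiv.Perm (Fin (n+1)))))]
  · rw [Finset.sum_insert (by simpa using hone_ne), Finset.sum_singleton]
    have t1 : (Equiv.Perm.sign (1 : Equiv.Perm (Fin (n+1)))) • ∏ i, M ((1 : Equiv.Perm (Fin (n+1))) i) i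
        = ∏ i, d i := by
      simp [hd]
    have t2 : (Equiv.Perm.sign (finRotate (n+1))) • ∏ i, M (finRotate (n+1) i) i
        = (-1 : R)^n * ∏ i, e i := by
      rw [sign_finRotate, Nat.add_sub_cancel]
      have : ∏ i, M (finRotate (n+1) i) i = ∏ i, e i := by
        apply Finset.prod_congr rfl
        intro i _
        rw [finRotate_succ_apply, he]
      rw [this]
      rcases Nat.even_or_odd n with hev | hod
      · rw [hev.neg_one_pow, Even.neg_one_pow hev]; simp
      · rw [hod.neg_one_pow, Odd.neg_one_pow hod]; simp
    rw [t1, t2]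
  · intro σ _ hσ
    have hnot : ¬ (σ = 1 ∨ σ = finRotate (n+1)) := by
      simp only [Finset.mem_insert, Finset.mem_singleton] at hσ
      tauto
    have : ¬ ∀ i, σ i = i ∨ σ i = i + 1 := fun hc => hnot (perm_classify hn σ hc)
    push_neg at this
    obtain ⟨i, hi1, hi2⟩ := this
    have : ∏ j, M (σ j) j = 0 := by
      apply Finset.prod_eq_zero (Finset.mem_univ i)
      exact h0 i (σ i) hi1 hi2
    rw [this, smul_zero]

lemma add_one_val {n : ℕ} (hn : 1 ≤ n) (i : Fin (n+1)) :
    ((i : ℕ) + 1) % (n+1) = ((i + 1 : Fin (n+1)) : ℕ) := by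
  rw [Fin.val_add, Fin.val_one', Nat.mod_eq_of_lt (show 1 < n+1 by omega)]

lemma finSuccNe {n : ℕ} (hn : 1 ≤ n) (i : Fin (n+1)) : (i + 1 : Fin (n+1)) ≠ i := by
  intro hc
  have h2 := (add_eq_left ..).mp hc
  have h3 : ((1 : Fin (n+1)) : ℕ) = ((0 : Fin (n+1)) : ℕ) := by rw [h2]
  simp [Fin.val_one'] at h3
  omega

lemma charpoly_Acyc {n : ℕ} (hn : 1 ≤ n) (α : Fin (n+1) → ℝ) (β a : ℝ) :
    (Acyc (n+1) α β a).charpoly = ∏ i, (X + C (a * α i)) - C β := by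
  rw [Matrix.charpoly]
  rw [det_cyclic hn _ (fun i => X + C (a * α i))
      (fun i => -C (if ((i + 1 : Fin (n+1)) : ℕ) = 0 then β else 1))]
  · have hβ : ∏ x : Fin (n+1), (if ((x + 1 : Fin (n+1)) : ℕ) = 0 then β else (1:ℝ)) = β := by
      rw [Finset.prod_eq_single (Fin.last n)]
      · simp
      · intro x _ hx
        rw [if_neg]
        rw [← add_one_val hn x]
        have hxlt : (x : ℕ) < n := by
          have := x.isLt
          rcases Nat.lt_or_ge (x : ℕ) n with h | h
          · exact h
          · exact absurd (Fin.ext (by rw [Fin.val_last]; omega : (x:ℕ) = (Fin.last n : ℕ))) hx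
        rw [Nat.mod_eq_of_lt (by omega)]
        omega
      · simp
    have hprod : ∏ i : Fin (n+1), -C (if ((i + 1 : Fin (n+1)) : ℕ) = 0 then β else (1:ℝ))
        = (-1 : ℝ[X])^(n+1) * C β := by
      have h4 : ∀ i : Fin (n+1), -C (if ((i + 1 : Fin (n+1)) : ℕ) = 0 then β else (1:ℝ))
          = (-1) * C (if ((i + 1 : Fin (n+1)) : ℕ) = 0 then β else (1:ℝ)) := by
        intro i; ring
      rw [Finset.prod_congr rfl (fun i _ => h4 i), Finset.prod_mul_distrib,
        Finset.prod_const, Finset.card_univ, Fintype.card_fin, ← map_prod, hβ]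
    rw [hprod, ← mul_assoc, ← pow_add]
    have hodd : Odd (n + (n + 1)) := ⟨n, by ring⟩
    rw [hodd.neg_one_pow]
    ring
  · intro i
    rw [Matrix.charmatrix_apply_eq]
    have h : Acyc (n+1) α β a i i = -(a * α i) := by simp [Acyc]
    rw [h, map_neg, sub_neg_eq_add]
  · intro i
    rw [Matrix.charmatrix_apply_ne _ _ _ (finSuccNe hn i)]
    have h : Acyc (n+1) α β a (i+1) i = (if ((i + 1 : Fin (n+1)) : ℕ) = 0 then β else 1) := by
      show (if i = i + 1 then -(a * α (i+1))
        else if ((i : ℕ) + 1) % (n+1) = ((i+1 : Fin (n+1)) : ℕ)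
          then (if ((i+1 : Fin (n+1)) : ℕ) = 0 then β else 1) else 0)
        = (if ((i + 1 : Fin (n+1)) : ℕ) = 0 then β else 1)
      rw [if_neg (fun hc => finSuccNe hn i hc.symm), if_pos (add_one_val hn i)]
    rw [h]
  · intro i j hji hji1
    rw [Matrix.charmatrix_apply_ne _ _ _ hji]
    have h : Acyc (n+1) α β a j i = 0 := by
      show (if i = j then -(a * α j)
        else if ((i : ℕ) + 1) % (n+1) = (j : ℕ)
          then (if (j : ℕ) = 0 then β else 1) else 0) = 0
      rw [if_neg (fun hc => hji hc.symm), if_neg]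
      intro hc
      rw [add_one_val hn i] at hc
      exact hji1 (Fin.ext hc.symm)
    rw [h, map_zero, neg_zero]

lemma derivative_finprod {R : Type*} [CommSemiring R] {ι : Type*} [DecidableEq ι]
    (s : Finset ι) (f : ι → Polynomial R) :
    derivative (∏ i ∈ s, f i) = ∑ i ∈ s, (∏ j ∈ s.erase i, f j) * derivative (f i) := by
  induction s using Finset.induction_on with
  | empty => simp
  | @insert a s ha ih =>
    rw [Finset.prod_insert ha, derivative_mul, ih, Finset.sum_insert ha,
      Finset.erase_insert ha, Finset.mul_sum]
    congr 1
    · ring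
    · apply Finset.sum_congr rfl
      intro i hi
      have hia : i ≠ a := fun hc => ha (hc ▸ hi)
      rw [Finset.erase_insert_of_ne hia.symm,
        Finset.prod_insert (fun hc => ha (Finset.mem_of_mem_erase hc))]
      ring

-- modulus bounds
lemma abs_le_abs_add {z : ℂ} (hz : z.re = 0) (c : ℝ) : |c| ≤ ‖z + c‖ := by
  have h : (z + (c:ℂ)).re = c := by simp [hz]
  calc |c| = |(z + (c:ℂ)).re| := by rw [h]
  _ ≤ ‖z + c‖ := Complex.abs_re_le_norm _

lemma abs_lt_abs_add {z : ℂ} (hz : z.re = 0) (hzim : z.im ≠ 0) (c : ℝ) :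
    |c| < ‖z + c‖ := by
  have h : (z + (c:ℂ)).re = c := by simp [hz]
  have him : (z + (c:ℂ)).im = z.im := by simp
  have hsq : |c|^2 < (‖z + c‖)^2 := by
    rw [Complex.sq_norm, Complex.normSq_apply, h, him, sq_abs]
    have him2 : 0 < z.im^2 := by positivity
    nlinarith
  exact lt_of_pow_lt_pow_left₀ 2 (norm_nonneg _) hsq


/-- **No purely imaginary eigenvalues beyond the simple zero at `a = 1`
(Proposition 3.4).** If `(−1)^{N_aut} = β` and `Σ_m 1/α_m ≠ 0`, then (a) `0` is
an algebraically simple root of the characteristic polynomial of `A(1)` and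
`A(1)` has no other eigenvalue with zero real part; (b) for every `a > 1`, the
matrix `A(a)` has no eigenvalue with zero real part. -/
theorem no_imaginary_eigenvalues_beyond_one (N : ℕ) (hN : 3 ≤ N)
    (α : Fin N → ℝ) (hα : ∀ m, α m ≠ 0) (hprod : ∏ m : Fin N, |α m| = 1)
    (b : ℤ) (hb : b = 1 ∨ b = -1) (hpar : (-1 : ℤ) ^ (NautOf α) = b)
    (hsum : ∑ m : Fin N, (α m)⁻¹ ≠ 0) :
    (Polynomial.rootMultiplicity (0 : ℂ)
        (Matrix.charpoly ((Acyc N α (b : ℝ) 1).map (algebraMap ℝ ℂ))) = 1 ∧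
      ∀ z ∈ specC (Acyc N α (b : ℝ) 1), z.re = 0 → z = 0) ∧
    (∀ a : ℝ, 1 < a → ∀ z ∈ specC (Acyc N α (b : ℝ) a), z.re ≠ 0) := by
  obtain ⟨n, rfl⟩ : ∃ n, N = n + 1 := ⟨N - 1, by omega⟩
  have hn : 1 ≤ n := by omega
  set bR : ℝ := (b : ℝ) with hbR
  have habsb : |bR| = 1 := by rcases hb with h | h <;> simp [hbR, h]
  have hbne : bR ≠ 0 := by intro h; rw [h] at habsb; simp at habsb
  -- product of α equals bR
  have hprodα : ∏ m, α m = bR := by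
    have h1 : ∀ m, α m = (if α m < 0 then (-1:ℝ) else 1) * |α m| := by
      intro m
      rcases lt_or_gt_of_ne (hα m) with h | h
      · rw [if_pos h, abs_of_neg h]; ring
      · rw [if_neg (not_lt.mpr h.le), abs_of_pos h]; ring
    rw [Finset.prod_congr rfl (fun m _ => h1 m), Finset.prod_mul_distrib, hprod, mul_one,
      Finset.prod_ite, Finset.prod_const, Finset.prod_const, one_pow, mul_one]
    have h2 : ((-1 : ℝ))^(NautOf α) = bR := by
      rw [hbR, ← hpar]; push_cast; ring
    simpa [NautOf] using h2
  -- charpoly over ℂ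
  have hcp : ∀ a : ℝ, (Matrix.charpoly ((Acyc (n+1) α bR a).map (algebraMap ℝ ℂ)))
      = ∏ i, (X + C ((a * α i : ℝ) : ℂ)) - C ((bR : ℝ) : ℂ) := by
    intro a
    rw [Matrix.charpoly_map, charpoly_Acyc hn]
    simp [Polynomial.map_sub, Polynomial.map_prod]
  have hmonic : ∀ a : ℝ, (Matrix.charpoly ((Acyc (n+1) α bR a).map (algebraMap ℝ ℂ))).Monic :=
    fun a => (Acyc (n+1) α bR a).map (algebraMap ℝ ℂ) |>.charpoly_monic
  have hne0 : ∀ a : ℝ, (Matrix.charpoly ((Acyc (n+1) α bR a).map (algebraMap ℝ ℂ))) ≠ 0 :=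
    fun a => (hmonic a).ne_zero
  have heval : ∀ (a : ℝ) (z : ℂ),
      eval z (Matrix.charpoly ((Acyc (n+1) α bR a).map (algebraMap ℝ ℂ)))
        = ∏ i, (z + ((a * α i : ℝ) : ℂ)) - ((bR : ℝ) : ℂ) := by
    intro a z
    rw [hcp]
    simp [eval_prod]
  -- lower bound on modulus of product
  have hprod_le : ∀ (a : ℝ), 1 ≤ a → ∀ z : ℂ, z.re = 0 →
      a^(n+1) ≤ ∏ i, ‖z + ((a * α i : ℝ) : ℂ)‖ := by
    intro a ha z hz
    have key : ∀ i : Fin (n+1), a * |α i| ≤ ‖z + ((a * α i : ℝ) : ℂ)‖ := by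
      intro i
      have := abs_le_abs_add hz (a * α i)
      rwa [abs_mul, abs_of_pos (by linarith : (0:ℝ) < a)] at this
    calc a^(n+1) = ∏ i : Fin (n+1), a * |α i| := by
          rw [Finset.prod_mul_distrib, Finset.prod_const, hprod, Finset.card_univ,
            Fintype.card_fin, mul_one]
    _ ≤ _ := Finset.prod_le_prod
          (fun i _ => mul_nonneg (by linarith) (abs_nonneg _)) (fun i _ => key i)
  have hprod_lt : ∀ (a : ℝ), 1 ≤ a → ∀ z : ℂ, z.re = 0 → z.im ≠ 0 →
      a^(n+1) < ∏ i, ‖z + ((a * α i : ℝ) : ℂ)‖ := by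
    intro a ha z hz hzim
    have key : ∀ i : Fin (n+1), a * |α i| < ‖z + ((a * α i : ℝ) : ℂ)‖ := by
      intro i
      have := abs_lt_abs_add hz hzim (a * α i)
      rwa [abs_mul, abs_of_pos (by linarith : (0:ℝ) < a)] at this
    calc a^(n+1) = ∏ i : Fin (n+1), a * |α i| := by
          rw [Finset.prod_mul_distrib, Finset.prod_const, hprod, Finset.card_univ,
            Fintype.card_fin, mul_one]
    _ < _ := Finset.prod_lt_prod_of_nonempty
          (fun i _ => mul_pos (by linarith) (abs_pos.mpr (hα i))) (fun i _ => key i)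
          Finset.univ_nonempty
  -- a root with re = 0 gives product of moduli equal to 1
  have hroot_abs : ∀ (a : ℝ) (z : ℂ), z ∈ specC (Acyc (n+1) α bR a) →
      ∏ i, ‖z + ((a * α i : ℝ) : ℂ)‖ = 1 := by
    intro a z hzmem
    have hroot : IsRoot _ z := (Polynomial.mem_roots (hne0 a)).mp hzmem
    have h1 : ∏ i, (z + ((a * α i : ℝ) : ℂ)) = ((bR : ℝ) : ℂ) := by
      have := hroot
      rw [IsRoot, heval, sub_eq_zero] at this
      exact this
    calc ∏ i, ‖z + ((a * α i : ℝ) : ℂ)‖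
        = ‖∏ i, (z + ((a * α i : ℝ) : ℂ))‖ := (norm_prod _ _).symm
    _ = ‖((bR : ℝ) : ℂ)‖ := by rw [h1]
    _ = 1 := by rw [Complex.norm_real, Real.norm_eq_abs, habsb]
  constructor
  · constructor
    · -- simple root at 0 for a = 1
      set p := Matrix.charpoly ((Acyc (n+1) α bR 1).map (algebraMap ℝ ℂ)) with hp
      have hproot : IsRoot p 0 := by
        rw [IsRoot, heval]
        simp only [add_zero, zero_add, one_mul]
        rw [← Complex.ofReal_prod]
        push_cast
        rw [← Complex.ofReal_prod, hprodα]
        simp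
      have hder : eval 0 (derivative p) ≠ 0 := by
        rw [hp, hcp, derivative_sub, derivative_C, sub_zero, derivative_finprod]
        have hterm : ∀ i : Fin (n+1),
            eval 0 ((∏ j ∈ Finset.univ.erase i, (X + C ((1 * α j : ℝ) : ℂ))) *
              derivative (X + C ((1 * α i : ℝ) : ℂ)))
            = (∏ j, ((α j : ℝ) : ℂ)) * ((α i : ℝ) : ℂ)⁻¹ := by
          intro i
          rw [derivative_add, derivative_X, derivative_C, add_zero]
          simp only [eval_mul, eval_prod, eval_add, eval_X, eval_C, eval_one, mul_one, zero_add,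
            one_mul]
          have hαi : ((α i : ℝ) : ℂ) ≠ 0 := by
            simpa using hα i
          rw [eq_comm, mul_inv_eq_iff_eq_mul₀ hαi, eq_comm]
          rw [← Finset.prod_erase_mul Finset.univ _ (Finset.mem_univ i)]
        rw [eval_finset_sum, Finset.sum_congr rfl (fun i _ => hterm i), ← Finset.mul_sum]
        apply mul_ne_zero
        · rw [← Complex.ofReal_prod, hprodα]
          exact Complex.ofReal_ne_zero.mpr hbne
        · have : ∑ i : Fin (n+1), ((α i : ℝ) : ℂ)⁻¹ = ((∑ i, (α i)⁻¹ : ℝ) : ℂ) := by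
            push_cast
            rfl
          rw [this]
          exact Complex.ofReal_ne_zero.mpr hsum
      have h1 : 0 < rootMultiplicity 0 p := (rootMultiplicity_pos (hne0 1)).mpr hproot
      have h2 : rootMultiplicity 0 (derivative p) = rootMultiplicity 0 p - 1 :=
        derivative_rootMultiplicity_of_root hproot
      have h3 : rootMultiplicity 0 (derivative p) = 0 :=
        rootMultiplicity_eq_zero (by rw [IsRoot]; exact hder)
      omega
    · intro z hz hzre
      by_contra hzne
      have hzim : z.im ≠ 0 := by
        intro h
        exact hzne (Complex.ext hzre h)
      have := hprod_lt 1 le_rfl z hzre hzim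
      rw [hroot_abs 1 z hz, one_pow] at this
      exact lt_irrefl _ this
  · intro a ha z hz hzre
    have h1 := hprod_le a ha.le z hzre
    rw [hroot_abs a z hz] at h1
    have : (1:ℝ) < a^(n+1) := one_lt_pow₀ ha (by omega)
    linarith
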